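/- Let $(T,\mu,\eta,\varsigma,\ell,e)$ be a cartesian-monoidal symmetric monad on a cartesian category (so $\ell: T(A\times B)\xrightarrow{\cong}T(A)\times T(B)$ and $e: T(1)\cong 1$). Then the composite $\underline\varsigma_X: T(T(X)\times X)\xrightarrow{\ell}TT(X)\times T(X)\xrightarrow{\varsigma_X\times\mathrm{id}}TT(X)\times T(X)$ is a symmetric distributive law (indeed an isomorphism) between the symmetric monad $T$ and the endofunctor $T^\bullet$, where $T^\bullet(X) = T(X)\times X$. -/

import Mathlib

open CategoryTheory MonoidalCategory CartesianMonoidalCategory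

variable {C : Type*} [Category C] [CartesianMonoidalCategory C]

/-- The canonical product-comparison map `ℓ : T(X ⊗ Y) ⟶ T(X) ⊗ T(Y)`. -/
noncomputable def ell (T : C ⥤ C) (X Y : C) : T.obj (X ⊗ Y) ⟶ T.obj X ⊗ T.obj Y :=
  lift (T.map (fst X Y)) (T.map (snd X Y))

/-- The induced map `ς̲_X = (ς_X ⊗ id) ∘ ℓ : T(T(X) ⊗ X) ⟶ T(T(X)) ⊗ T(X)`,
from `T T•` to `T• T` where `T•(X) = T(X) ⊗ X`. -/
noncomputable def sigBar (T : C ⥤ C) (ς : T ⋙ T ⟶ T ⋙ T) (X : C) :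
    T.obj (T.obj X ⊗ X) ⟶ T.obj (T.obj X) ⊗ T.obj X :=
  ell T (T.obj X) X ≫ (ς.app X ▷ T.obj X)

/-- For a cartesian-monoidal symmetric monad `(T, μ, η, ς, ℓ, e)` on a
cartesian category, the composite `ς̲ = (ς ⊗ id) ∘ ℓ` is a symmetric
distributive law — indeed an isomorphism — between the symmetric monad `T` and
the endofunctor `T•(X) = T(X) ⊗ X`. -/
theorem sigBar_is_symmetric_distributive_law
    (T : C ⥤ C) (μ : T ⋙ T ⟶ T) (η : 𝟭 C ⟶ T) (ς : T ⋙ T ⟶ T ⋙ T)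
    -- `T` is cartesian monoidal: the comparison maps are isomorphisms
    (hℓiso : ∀ X Y : C, IsIso (ell T X Y)) (heiso : IsIso (toUnit (T.obj (𝟙_ C))))
    -- monad laws
    (hmassoc : ∀ X : C, T.map (μ.app X) ≫ μ.app X = μ.app (T.obj X) ≫ μ.app X)
    (hmunitl : ∀ X : C, η.app (T.obj X) ≫ μ.app X = 𝟙 (T.obj X))
    (hmunitr : ∀ X : C, T.map (η.app X) ≫ μ.app X = 𝟙 (T.obj X))
    -- symmetric monad laws
    (hcomm : ∀ X : C, ς.app X ≫ μ.app X = μ.app X)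
    (hinv : ∀ X : C, ς.app X ≫ ς.app X = 𝟙 (T.obj (T.obj X)))
    (hYB : ∀ X : C,
      T.map (ς.app X) ≫ ς.app (T.obj X) ≫ T.map (ς.app X)
        = ς.app (T.obj X) ≫ T.map (ς.app X) ≫ ς.app (T.obj X))
    (hunit : ∀ X : C, η.app (T.obj X) ≫ ς.app X = T.map (η.app X))
    (hlast : ∀ X : C,
      ς.app (T.obj X) ≫ T.map (ς.app X) ≫ μ.app (T.obj X)
        = T.map (μ.app X) ≫ ς.app X) :
    -- `ς̲` is an isomorphism
    (∀ X : C, IsIso (sigBar T ς X)) ∧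
    -- naturality of `ς̲`
    (∀ {X Y : C} (f : X ⟶ Y),
      T.map (T.map f ⊗ₘ f) ≫ sigBar T ς Y
        = sigBar T ς X ≫ (T.map (T.map f) ⊗ₘ T.map f)) ∧
    -- compatibility with `μ`
    (∀ X : C,
      μ.app (T.obj X ⊗ X) ≫ sigBar T ς X
        = T.map (sigBar T ς X) ≫ sigBar T ς (T.obj X)
            ≫ (T.map (μ.app X) ⊗ₘ μ.app X)) ∧
    -- compatibility with `η`
    (∀ X : C,
      η.app (T.obj X ⊗ X) ≫ sigBar T ς X = T.map (η.app X) ⊗ₘ η.app X) ∧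
    -- compatibility with `ς`
    (∀ X : C,
      T.map (sigBar T ς X) ≫ sigBar T ς (T.obj X) ≫ (T.map (ς.app X) ⊗ₘ ς.app X)
        = ς.app (T.obj X ⊗ X) ≫ T.map (sigBar T ς X) ≫ sigBar T ς (T.obj X)) := by
  -- component formulas for `sigBar`
  have fst_eq : ∀ X : C, sigBar T ς X ≫ fst (T.obj (T.obj X)) (T.obj X)
      = T.map (fst (T.obj X) X) ≫ ς.app X := by
    intro X; simp [sigBar, ell]
  have snd_eq : ∀ X : C, sigBar T ς X ≫ snd (T.obj (T.obj X)) (T.obj X)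
      = T.map (snd (T.obj X) X) := by
    intro X; simp [sigBar, ell]
  have fst_eq' : ∀ (X Z : C) (g : T.obj (T.obj X) ⟶ Z),
      sigBar T ς X ≫ fst (T.obj (T.obj X)) (T.obj X) ≫ g
        = T.map (fst (T.obj X) X) ≫ ς.app X ≫ g := by
    intro X Z g; rw [← Category.assoc, fst_eq, Category.assoc]
  have snd_eq' : ∀ (X Z : C) (g : T.obj X ⟶ Z),
      sigBar T ς X ≫ snd (T.obj (T.obj X)) (T.obj X) ≫ g
        = T.map (snd (T.obj X) X) ≫ g := by
    intro X Z g; rw [← Category.assoc, snd_eq]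
  -- ς is an isomorphism (it is its own inverse)
  haveI hςiso : ∀ X : C, IsIso (ς.app X) := fun X => ⟨ς.app X, hinv X, hinv X⟩
  -- key derived law: Tς ≫ ς_T ≫ Tμ = μ_T ≫ ς
  have hlast' : ∀ X : C,
      T.map (ς.app X) ≫ ς.app (T.obj X) ≫ T.map (μ.app X)
        = μ.app (T.obj X) ≫ ς.app X := by
    intro X
    have h3 : T.map (ς.app X) ≫ T.map (ς.app X) = 𝟙 _ := by
      rw [← T.map_comp, hinv]; exact T.map_id _
    have h1 : T.map (μ.app X)
        = ς.app (T.obj X) ≫ T.map (ς.app X) ≫ μ.app (T.obj X) ≫ ς.app X := by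
      calc T.map (μ.app X)
          = T.map (μ.app X) ≫ ς.app X ≫ ς.app X := by rw [hinv]; simp
        _ = (T.map (μ.app X) ≫ ς.app X) ≫ ς.app X := by simp
        _ = (ς.app (T.obj X) ≫ T.map (ς.app X) ≫ μ.app (T.obj X)) ≫ ς.app X := by
              rw [hlast X]
        _ = ς.app (T.obj X) ≫ T.map (ς.app X) ≫ μ.app (T.obj X) ≫ ς.app X := by simp
    rw [h1]
    calc T.map (ς.app X) ≫ ς.app (T.obj X) ≫ ς.app (T.obj X)
            ≫ T.map (ς.app X) ≫ μ.app (T.obj X) ≫ ς.app X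
        = T.map (ς.app X) ≫ (ς.app (T.obj X) ≫ ς.app (T.obj X))
            ≫ T.map (ς.app X) ≫ μ.app (T.obj X) ≫ ς.app X := by simp
      _ = T.map (ς.app X) ≫ T.map (ς.app X) ≫ μ.app (T.obj X) ≫ ς.app X := by
            rw [hinv (T.obj X)]; simp
      _ = (T.map (ς.app X) ≫ T.map (ς.app X)) ≫ μ.app (T.obj X) ≫ ς.app X := by simp
      _ = μ.app (T.obj X) ≫ ς.app X := by rw [h3]; simp
  refine ⟨?_, ?_, ?_, ?_, ?_⟩
  · -- isomorphism
    intro X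
    rw [show sigBar T ς X = ell T (T.obj X) X ≫ (ς.app X ▷ T.obj X) from rfl]
    haveI := hℓiso (T.obj X) X
    infer_instance
  · -- naturality
    intro X Y f
    have nat : T.map (T.map f) ≫ ς.app Y = ς.app X ≫ T.map (T.map f) := by
      have := ς.naturality f; simpa using this
    apply hom_ext
    · simp only [Functor.comp_obj, Category.assoc, tensorHom_fst, fst_eq, fst_eq']
      rw [← Functor.map_comp_assoc, tensorHom_fst, Functor.map_comp_assoc, nat]
    · simp only [Functor.comp_obj, Category.assoc, tensorHom_snd, snd_eq, snd_eq',
        ← T.map_comp, tensorHom_snd]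
  · -- μ compatibility
    intro X
    apply hom_ext
    · simp only [Functor.comp_obj, Category.assoc, tensorHom_fst, fst_eq, fst_eq']
      rw [← Functor.map_comp_assoc, fst_eq, Functor.map_comp_assoc, hlast' X]
      have natμ : T.map (T.map (fst (T.obj X) X)) ≫ μ.app (T.obj X)
          = μ.app (T.obj X ⊗ X) ≫ T.map (fst (T.obj X) X) := by
        have := μ.naturality (fst (T.obj X) X); simpa using this
      rw [reassoc_of% natμ]
    · simp only [Functor.comp_obj, Category.assoc, tensorHom_snd, snd_eq, snd_eq']
      rw [← Functor.map_comp_assoc, snd_eq]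
      have natμ : T.map (T.map (snd (T.obj X) X)) ≫ μ.app X
          = μ.app (T.obj X ⊗ X) ≫ T.map (snd (T.obj X) X) := by
        have := μ.naturality (snd (T.obj X) X); simpa using this
      rw [natμ]
  · -- η compatibility
    intro X
    apply hom_ext
    · simp only [Functor.id_obj, Category.assoc, tensorHom_fst, fst_eq, fst_eq']
      have natη : fst (T.obj X) X ≫ η.app (T.obj X)
          = η.app (T.obj X ⊗ X) ≫ T.map (fst (T.obj X) X) := by
        have := η.naturality (fst (T.obj X) X); simpa using this
      rw [← reassoc_of% natη, hunit]
    · simp only [Functor.id_obj, Category.assoc, tensorHom_snd, snd_eq, snd_eq']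
      have natη : snd (T.obj X) X ≫ η.app X
          = η.app (T.obj X ⊗ X) ≫ T.map (snd (T.obj X) X) := by
        have := η.naturality (snd (T.obj X) X); simpa using this
      rw [← natη]
  · -- ς compatibility
    intro X
    apply hom_ext
    · simp only [Functor.comp_obj, Category.assoc, tensorHom_fst, fst_eq, fst_eq']
      rw [← Functor.map_comp_assoc, ← Functor.map_comp_assoc, fst_eq]
      simp only [Functor.map_comp, Category.assoc]
      rw [hYB X]
      have natς : T.map (T.map (fst (T.obj X) X)) ≫ ς.app (T.obj X)
          = ς.app (T.obj X ⊗ X) ≫ T.map (T.map (fst (T.obj X) X)) := by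
        have := ς.naturality (fst (T.obj X) X); simpa using this
      rw [reassoc_of% natς]
    · simp only [Functor.comp_obj, Category.assoc, tensorHom_snd, snd_eq, snd_eq']
      rw [← Functor.map_comp_assoc, ← Functor.map_comp, snd_eq]
      have natς : T.map (T.map (snd (T.obj X) X)) ≫ ς.app X
          = ς.app (T.obj X ⊗ X) ≫ T.map (T.map (snd (T.obj X) X)) := by
        have := ς.naturality (snd (T.obj X) X); simpa using this
      rw [natς]
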